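/- Let d ∈ {4, 6} and R₀ > 0. Then there exists a constant C > 0 such that for all R ≥ R₀ and all f ∈ C²([0,R], ℝ): ∫₀^R |f(r)|² r^{d−3} dr ≤ C ∫₀^R (|f(r)|² + |f′(r)|²) r^{d−1} dr, and ∫₀^R |f′(r)|² r^{d−3} dr ≤ C ( ∫₀^R (|f(r)|² + |f′(r)|²) r^{d−1} dr + ∫₀^R |f″(r) + (d−1) f′(r)/r|² r^{d−1} dr ). -/

import Mathlib

noncomputable section

open MeasureTheory Set

private lemma pt1 (n : ℕ) (F G r R M : ℝ) (hr : 0 < r) (hrR : r ≤ R)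
    (hM2 : 2 ≤ M) (hMR : ((n:ℝ)+2) ≤ M * R^2) :
    (3*(n:ℝ)/4) * (F^2 * r^n) ≤
      (2*F*G*(r^(n+1) - r^(n+2)/R) + F^2*(((n:ℝ)+1)*r^n - ((n:ℝ)+2)*r^(n+1)/R))
        + M * ((F^2+G^2) * r^(n+2)) := by
  have hR : 0 < R := lt_of_lt_of_le hr hrR
  have ht : (0:ℝ) ≤ r^n := by positivity
  have key : (2*F*G*(r^(n+1) - r^(n+2)/R) + F^2*(((n:ℝ)+1)*r^n - ((n:ℝ)+2)*r^(n+1)/R))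
        + M * ((F^2+G^2) * r^(n+2)) - (3*(n:ℝ)/4) * (F^2 * r^n)
      = ((M*R^2-((n:ℝ)+2))*F^2*r^2*r^n + (M-2)*G^2*r^2*r^n*R^2
          + ((n:ℝ)+2)*F^2*(r-R/2)^2*r^n + (R-r)*(F+2*G*r)^2*r^n*R/2
          + r*(F^2/2+2*G^2*r^2)*r^n*R) / R^2 := by
    field_simp
    ring
  have hE0 : (0:ℝ) ≤ (M*R^2-((n:ℝ)+2))*F^2*r^2*r^n + (M-2)*G^2*r^2*r^n*R^2
      + ((n:ℝ)+2)*F^2*(r-R/2)^2*r^n + (R-r)*(F+2*G*r)^2*r^n*R/2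
      + r*(F^2/2+2*G^2*r^2)*r^n*R := by
    have h1 : (0:ℝ) ≤ (M*R^2-((n:ℝ)+2))*F^2*r^2*r^n :=
      mul_nonneg (mul_nonneg (mul_nonneg (by linarith) (sq_nonneg F)) (sq_nonneg r)) ht
    have h2 : (0:ℝ) ≤ (M-2)*G^2*r^2*r^n*R^2 :=
      mul_nonneg (mul_nonneg (mul_nonneg (mul_nonneg (by linarith) (sq_nonneg G))
        (sq_nonneg r)) ht) (sq_nonneg R)
    have h3 : (0:ℝ) ≤ ((n:ℝ)+2)*F^2*(r-R/2)^2*r^n :=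
      mul_nonneg (mul_nonneg (mul_nonneg (by positivity) (sq_nonneg F)) (sq_nonneg _)) ht
    have h4 : (0:ℝ) ≤ (R-r)*(F+2*G*r)^2*r^n*R/2 := by
      have : (0:ℝ) ≤ (R-r)*(F+2*G*r)^2*r^n*R :=
        mul_nonneg (mul_nonneg (mul_nonneg (by linarith) (sq_nonneg _)) ht) hR.le
      linarith
    have h5 : (0:ℝ) ≤ r*(F^2/2+2*G^2*r^2)*r^n*R :=
      mul_nonneg (mul_nonneg (mul_nonneg hr.le (by positivity)) ht) hR.le
    linarith
  have := div_nonneg hE0 (sq_nonneg R)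
  linarith [key, this]

private lemma pt2 (n : ℕ) (G G' r : ℝ) (hr : 0 < r) :
    ((n:ℝ)+3)/2 * (G^2 * r^n) + (2*G*G'*r^(n+1) + ((n:ℝ)+1)*G^2*r^n)
      ≤ 2/((n:ℝ)+3) * ((G' + ((n:ℝ)+2)*G/r)^2 * r^(n+2)) := by
  have h3 : (0:ℝ) < (n:ℝ)+3 := by positivity
  have hsub : (G' + ((n:ℝ)+2)*G/r)^2 * r^(n+2) = (G'*r + ((n:ℝ)+2)*G)^2 * r^n := by
    field_simp
    ring
  rw [hsub, div_mul_eq_mul_div (2:ℝ) ((n:ℝ)+3), le_div_iff₀ h3]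
  have ht : (0:ℝ) ≤ r^n := by positivity
  have hid : 2*((G'*r + ((n:ℝ)+2)*G)^2 * r^n)
      - (((n:ℝ)+3)/2 * (G^2 * r^n) + (2*G*G'*r^(n+1) + ((n:ℝ)+1)*G^2*r^n)) * ((n:ℝ)+3)
      = (2*G'*r + ((n:ℝ)+1)*G)^2 * r^n / 2 := by ring
  linarith [mul_nonneg (sq_nonneg (2*G'*r + ((n:ℝ)+1)*G)) ht, hid]

set_option maxHeartbeats 1600000 in
private lemma hardy_core (n : ℕ) (hn : 1 ≤ n) (R₀ R : ℝ) (hR₀ : 0 < R₀) (hRR : R₀ ≤ R)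
    (f g g' : ℝ → ℝ)
    (hfc : ContinuousOn f (Icc 0 R))
    (hgc : ContinuousOn g (Icc 0 R))
    (hg'c : ContinuousOn g' (Icc 0 R))
    (hfd : ∀ r ∈ Ioo (0:ℝ) R, HasDerivAt f (g r) r)
    (hgd : ∀ r ∈ Ioo (0:ℝ) R, HasDerivAt g (g' r) r) :
    ((∫ r in Ioo (0:ℝ) R, (f r)^2 * r ^ n) ≤
        (max (((n:ℝ)+2)/R₀^2) 2 * (4/(3*(n:ℝ))) + 1) *
          ∫ r in Ioo (0:ℝ) R, ((f r)^2 + (g r)^2) * r ^ (n+2))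
    ∧ ((∫ r in Ioo (0:ℝ) R, (g r)^2 * r ^ n) ≤
        (max (((n:ℝ)+2)/R₀^2) 2 * (4/(3*(n:ℝ))) + 1) *
          ((∫ r in Ioo (0:ℝ) R, ((f r)^2 + (g r)^2) * r ^ (n+2))
            + ∫ r in Ioo (0:ℝ) R, (g' r + ((n:ℝ)+2) * g r / r)^2 * r ^ (n+2))) := by
  have hR : (0:ℝ) < R := lt_of_lt_of_le hR₀ hRR
  have hn' : (1:ℝ) ≤ (n:ℝ) := by exact_mod_cast hn
  set M : ℝ := max (((n:ℝ)+2)/R₀^2) 2 with hMdef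
  have hM2 : (2:ℝ) ≤ M := le_max_right _ _
  have hM0 : (0:ℝ) ≤ M := by linarith
  have hMR : ((n:ℝ)+2) ≤ M * R^2 := by
    have h1 : ((n:ℝ)+2)/R₀^2 ≤ M := le_max_left _ _
    have h2 : ((n:ℝ)+2) ≤ M * R₀^2 := by
      rw [div_le_iff₀ (by positivity)] at h1; linarith
    have h4 : R₀^2 ≤ R^2 := by nlinarith
    nlinarith [mul_le_mul_of_nonneg_left h4 hM0]
  have hIcc : ∀ {φ : ℝ → ℝ}, ContinuousOn φ (Icc 0 R) → IntegrableOn φ (Ioo 0 R) :=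
    fun hφ => hφ.integrableOn_Icc.mono_set Ioo_subset_Icc_self
  -- the integrals
  set I : ℝ := ∫ r in Ioo (0:ℝ) R, ((f r)^2 + (g r)^2) * r ^ (n+2) with hIdef
  set J : ℝ := ∫ r in Ioo (0:ℝ) R, (g' r + ((n:ℝ)+2) * g r / r)^2 * r ^ (n+2) with hJdef
  have hI0 : 0 ≤ I := setIntegral_nonneg measurableSet_Ioo
    (fun r hr => mul_nonneg (by positivity) (pow_nonneg hr.1.le _))
  have hJ0 : 0 ≤ J := setIntegral_nonneg measurableSet_Ioo
    (fun r hr => mul_nonneg (sq_nonneg _) (pow_nonneg hr.1.le _))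
  have hIint : IntegrableOn (fun r => ((f r)^2 + (g r)^2) * r ^ (n+2)) (Ioo 0 R) :=
    hIcc (((hfc.pow 2).add (hgc.pow 2)).mul (Continuous.continuousOn (continuous_pow (n+2))))
  -- Part 1
  set A : ℝ → ℝ := fun r =>
    2*f r*g r*(r^(n+1) - r^(n+2)/R) + (f r)^2*(((n:ℝ)+1)*r^n - ((n:ℝ)+2)*r^(n+1)/R) with hAdef
  have hAc : ContinuousOn A (Icc 0 R) := by
    apply ContinuousOn.add
    · exact ((continuousOn_const.mul hfc).mul hgc).mul (Continuous.continuousOn ((continuous_pow (n+1)).sub ((continuous_pow (n+2)).div_const R)))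
    · exact (hfc.pow 2).mul (Continuous.continuousOn ((continuous_const.mul (continuous_pow n)).sub ((continuous_const.mul (continuous_pow (n+1))).div_const R)))
  have hAft : (∫ r in Ioo (0:ℝ) R, A r) = 0 := by
    have hderiv : ∀ r ∈ Ioo (0:ℝ) R,
        HasDerivAt (fun r => (f r)^2 * (r^(n+1) - r^(n+2)/R)) (A r) r := by
      intro r hr
      have h1 : HasDerivAt (fun r => (f r)^2) (2 * f r * g r) r := by
        simpa using (hfd r hr).fun_pow 2
      have ha : HasDerivAt (fun x : ℝ => x^(n+1)) (((n:ℝ)+1) * r^n) r := by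
        simpa using hasDerivAt_pow (n+1) r
      have hb : HasDerivAt (fun x : ℝ => x^(n+2)) (((n:ℝ)+2) * r^(n+1)) r := by
        have h := hasDerivAt_pow (n+2) r
        rw [show n+2-1 = n+1 by omega] at h
        push_cast at h
        exact h
      have h2 := ha.sub (hb.div_const R)
      have hAr : A r = 2*f r*g r*(r^(n+1) - r^(n+2)/R)
          + (f r)^2*(((n:ℝ)+1)*r^n - ((n:ℝ)+2)*r^(n+1)/R) := by rw [hAdef]
      rw [hAr]
      exact h1.mul h2
    have hAint : IntervalIntegrable A volume 0 R := by
      apply ContinuousOn.intervalIntegrable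
      rwa [uIcc_of_le hR.le]
    have hFc : ContinuousOn (fun r => (f r)^2 * (r^(n+1) - r^(n+2)/R)) (Icc 0 R) :=
      (hfc.pow 2).mul (Continuous.continuousOn ((continuous_pow (n+1)).sub ((continuous_pow (n+2)).div_const R)))
    have h0 := intervalIntegral.integral_eq_sub_of_hasDerivAt_of_le hR.le hFc hderiv hAint
    rw [intervalIntegral.integral_of_le hR.le, integral_Ioc_eq_integral_Ioo] at h0
    rw [h0]
    have hRR' : R^(n+2)/R = R^(n+1) := by
      rw [pow_succ]
      field_simp
    have h01 : (0:ℝ)^(n+1) = 0 := zero_pow (by omega)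
    have h02 : (0:ℝ)^(n+2) = 0 := zero_pow (by omega)
    rw [hRR', h01, h02]
    ring
  have hmono1 : (∫ r in Ioo (0:ℝ) R, (3*(n:ℝ)/4) * ((f r)^2 * r^n))
      ≤ ∫ r in Ioo (0:ℝ) R, (A r + M * (((f r)^2 + (g r)^2) * r^(n+2))) := by
    apply setIntegral_mono_on
    · exact hIcc (continuousOn_const.mul ((hfc.pow 2).mul
        (Continuous.continuousOn (continuous_pow n))))
    · exact (hIcc hAc).add (hIint.const_mul M)
    · exact measurableSet_Ioo
    · intro r hr
      exact pt1 n (f r) (g r) r R M hr.1 hr.2.le hM2 hMR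
  have hsplit1 : (∫ r in Ioo (0:ℝ) R, (A r + M * (((f r)^2 + (g r)^2) * r^(n+2))))
      = (∫ r in Ioo (0:ℝ) R, A r) + M * I := by
    rw [integral_add (hIcc hAc) (hIint.const_mul M), integral_const_mul]
  have hlhs1 : (∫ r in Ioo (0:ℝ) R, (3*(n:ℝ)/4) * ((f r)^2 * r^n))
      = 3*(n:ℝ)/4 * ∫ r in Ioo (0:ℝ) R, (f r)^2 * r^n := integral_const_mul _ _
  set X : ℝ := ∫ r in Ioo (0:ℝ) R, (f r)^2 * r^n with hXdef
  have h1 : 3*(n:ℝ)/4 * X ≤ M * I := by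
    rw [hlhs1] at hmono1
    rw [hsplit1, hAft] at hmono1
    linarith
  have part1 : X ≤ (M * (4/(3*(n:ℝ))) + 1) * I := by
    have e : 4/(3*(n:ℝ)) * (3*(n:ℝ)/4 * X) = X := by
      field_simp
    nlinarith [mul_le_mul_of_nonneg_left h1 (show (0:ℝ) ≤ 4/(3*(n:ℝ)) by positivity), hI0, e]
  -- Part 2
  set B : ℝ → ℝ := fun r => 2*g r*g' r*r^(n+1) + ((n:ℝ)+1)*(g r)^2*r^n with hBdef
  have hBc : ContinuousOn B (Icc 0 R) := by
    apply ContinuousOn.add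
    · exact ((continuousOn_const.mul hgc).mul hg'c).mul
        (Continuous.continuousOn (continuous_pow (n+1)))
    · exact (continuousOn_const.mul (hgc.pow 2)).mul
        (Continuous.continuousOn (continuous_pow n))
  have hBft : (0:ℝ) ≤ ∫ r in Ioo (0:ℝ) R, B r := by
    have hderiv : ∀ r ∈ Ioo (0:ℝ) R,
        HasDerivAt (fun r => (g r)^2 * r^(n+1)) (B r) r := by
      intro r hr
      have h1 : HasDerivAt (fun r => (g r)^2) (2 * g r * g' r) r := by
        simpa using (hgd r hr).fun_pow 2
      have ha : HasDerivAt (fun x : ℝ => x^(n+1)) (((n:ℝ)+1) * r^n) r := by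
        simpa using hasDerivAt_pow (n+1) r
      have hBr : B r = 2*g r*g' r*r^(n+1) + (g r)^2*(((n:ℝ)+1)*r^n) := by
        rw [hBdef]; ring
      rw [hBr]
      exact h1.mul ha
    have hBint : IntervalIntegrable B volume 0 R := by
      apply ContinuousOn.intervalIntegrable
      rwa [uIcc_of_le hR.le]
    have hGc : ContinuousOn (fun r => (g r)^2 * r^(n+1)) (Icc 0 R) :=
      (hgc.pow 2).mul (Continuous.continuousOn (continuous_pow (n+1)))
    have h0 := intervalIntegral.integral_eq_sub_of_hasDerivAt_of_le hR.le hGc hderiv hBint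
    rw [intervalIntegral.integral_of_le hR.le, integral_Ioc_eq_integral_Ioo] at h0
    rw [h0, show ((0:ℝ)^(n+1)) = 0 from zero_pow (by omega)]
    have hnn : (0:ℝ) ≤ g R^2 * R^(n+1) := mul_nonneg (sq_nonneg _) (pow_nonneg hR.le _)
    simpa using hnn
  have hQint : IntegrableOn (fun r => (g' r + ((n:ℝ)+2) * g r / r)^2 * r ^ (n+2)) (Ioo 0 R) := by
    have hQc : ContinuousOn (fun r => (g' r)^2*r^(n+2) + 2*((n:ℝ)+2)*g r*g' r*r^(n+1)
        + ((n:ℝ)+2)^2*(g r)^2*r^n) (Icc 0 R) := by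
      apply ContinuousOn.add
      apply ContinuousOn.add
      · exact (hg'c.pow 2).mul (Continuous.continuousOn (continuous_pow (n+2)))
      · exact (((continuousOn_const.mul hgc).mul hg'c).mul
          (Continuous.continuousOn (continuous_pow (n+1))))
      · exact (continuousOn_const.mul (hgc.pow 2)).mul
          (Continuous.continuousOn (continuous_pow n))
    apply (hIcc hQc).congr_fun _ measurableSet_Ioo
    intro r hr
    have hr0 : r ≠ 0 := ne_of_gt hr.1
    field_simp
    ring
  have hmono2 : (∫ r in Ioo (0:ℝ) R, (((n:ℝ)+3)/2 * ((g r)^2 * r^n) + B r))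
      ≤ ∫ r in Ioo (0:ℝ) R, 2/((n:ℝ)+3) * ((g' r + ((n:ℝ)+2) * g r / r)^2 * r ^ (n+2)) := by
    apply setIntegral_mono_on
    · exact (hIcc (continuousOn_const.mul ((hgc.pow 2).mul
        (Continuous.continuousOn (continuous_pow n))))).add (hIcc hBc)
    · exact hQint.const_mul _
    · exact measurableSet_Ioo
    · intro r hr
      exact pt2 n (g r) (g' r) r hr.1
  have hsplit2 : (∫ r in Ioo (0:ℝ) R, (((n:ℝ)+3)/2 * ((g r)^2 * r^n) + B r))
      = ((n:ℝ)+3)/2 * (∫ r in Ioo (0:ℝ) R, (g r)^2 * r^n) + ∫ r in Ioo (0:ℝ) R, B r := by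
    rw [integral_add (hIcc (φ := fun r => ((n:ℝ)+3)/2 * ((g r)^2 * r^n)) (continuousOn_const.mul ((hgc.pow 2).mul
          (Continuous.continuousOn (continuous_pow n))))) (hIcc hBc), integral_const_mul]
  have hrhs2 : (∫ r in Ioo (0:ℝ) R, 2/((n:ℝ)+3) * ((g' r + ((n:ℝ)+2) * g r / r)^2 * r ^ (n+2)))
      = 2/((n:ℝ)+3) * J := integral_const_mul _ _
  set Y : ℝ := ∫ r in Ioo (0:ℝ) R, (g r)^2 * r^n with hYdef
  have hY0 : 0 ≤ Y := setIntegral_nonneg measurableSet_Ioo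
    (fun r hr => mul_nonneg (sq_nonneg _) (pow_nonneg hr.1.le _))
  have h2 : ((n:ℝ)+3)/2 * Y ≤ 2/((n:ℝ)+3) * J := by
    rw [hsplit2] at hmono2
    rw [hrhs2] at hmono2
    linarith
  have h2Y : 2 * Y ≤ J := by
    have ha : 2 * Y ≤ ((n:ℝ)+3)/2 * Y := by nlinarith [mul_nonneg (sub_nonneg.2 hn') hY0]
    have hb : 2/((n:ℝ)+3) ≤ 1/2 := by
      rw [div_le_div_iff₀ (by positivity) (by norm_num)]
      linarith
    have hc : 2/((n:ℝ)+3) * J ≤ 1/2 * J := mul_le_mul_of_nonneg_right hb hJ0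
    linarith
  have part2 : Y ≤ (M * (4/(3*(n:ℝ))) + 1) * (I + J) := by
    have hMn0 : (0:ℝ) ≤ M * (4/(3*(n:ℝ))) := mul_nonneg hM0 (by positivity)
    nlinarith [mul_nonneg hMn0 (add_nonneg hI0 hJ0)]
  exact ⟨part1, part2⟩

set_option maxHeartbeats 1600000 in
/-- Radial Hardy inequalities in dimensions `d ∈ {4,6}`, uniform over `R ≥ R₀`:
`∫₀^R |f|² r^{d−3} dr ≲ ∫₀^R (|f|²+|f′|²) r^{d−1} dr` and
`∫₀^R |f′|² r^{d−3} dr ≲ ∫₀^R (|f|²+|f′|²) r^{d−1} dr + ∫₀^R |f″+(d−1)f′/r|² r^{d−1} dr`. -/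
theorem radial_hardy_dims (d : ℕ) (hd : d = 4 ∨ d = 6) (R₀ : ℝ) (hR₀ : 0 < R₀) :
    ∃ C > (0:ℝ), ∀ R ≥ R₀, ∀ f : ℝ → ℝ, ContDiffOn ℝ 2 f (Set.Icc 0 R) →
      ((∫ r in Set.Ioo 0 R, |f r| ^ 2 * r ^ (d - 3)) ≤
        C * ∫ r in Set.Ioo 0 R, (|f r| ^ 2 + |deriv f r| ^ 2) * r ^ (d - 1))
      ∧ ((∫ r in Set.Ioo 0 R, |deriv f r| ^ 2 * r ^ (d - 3)) ≤
        C * ((∫ r in Set.Ioo 0 R, (|f r| ^ 2 + |deriv f r| ^ 2) * r ^ (d - 1))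
          + ∫ r in Set.Ioo 0 R,
              |deriv (deriv f) r + (d - 1 : ℝ) * deriv f r / r| ^ 2 * r ^ (d - 1))) := by
  obtain ⟨n, hn, rfl⟩ : ∃ n : ℕ, 1 ≤ n ∧ d = n + 3 := by
    rcases hd with rfl | rfl
    · exact ⟨1, by norm_num⟩
    · exact ⟨3, by norm_num⟩
  refine ⟨max (((n:ℝ)+2)/R₀^2) 2 * (4/(3*(n:ℝ))) + 1, ?_, ?_⟩
  · have h0 : (0:ℝ) ≤ max (((n:ℝ)+2)/R₀^2) 2 * (4/(3*(n:ℝ))) :=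
      mul_nonneg (le_trans (by norm_num) (le_max_right _ _)) (by positivity)
    linarith
  intro R hRR f hf
  have hR : (0:ℝ) < R := lt_of_lt_of_le hR₀ hRR
  have hu : UniqueDiffOn ℝ (Icc (0:ℝ) R) := uniqueDiffOn_Icc hR
  set g : ℝ → ℝ := derivWithin f (Icc 0 R) with hgdef
  set g' : ℝ → ℝ := derivWithin g (Icc 0 R) with hg'def
  have hfc : ContinuousOn f (Icc 0 R) := hf.continuousOn
  have hg1 : ContDiffOn ℝ 1 g (Icc 0 R) := hf.derivWithin hu (show (1:WithTop ℕ∞)+1 ≤ 2 by norm_num)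
  have hgc : ContinuousOn g (Icc 0 R) := hg1.continuousOn
  have hg'c : ContinuousOn g' (Icc 0 R) :=
    (hg1.derivWithin hu (show (0:WithTop ℕ∞)+1 ≤ 1 by norm_num)).continuousOn
  have hfd : ∀ r ∈ Ioo (0:ℝ) R, HasDerivAt f (g r) r := fun r hr =>
    ((hf.differentiableOn (by norm_num) r (Set.mem_Icc.mpr ⟨hr.1.le, hr.2.le⟩)).hasDerivWithinAt).hasDerivAt
      (Icc_mem_nhds hr.1 hr.2)
  have hgd : ∀ r ∈ Ioo (0:ℝ) R, HasDerivAt g (g' r) r := fun r hr =>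
    ((hg1.differentiableOn one_ne_zero r (Set.mem_Icc.mpr ⟨hr.1.le, hr.2.le⟩)).hasDerivWithinAt).hasDerivAt
      (Icc_mem_nhds hr.1 hr.2)
  have key := hardy_core n hn R₀ R hR₀ hRR f g g' hfc hgc hg'c hfd hgd
  have e3 : n + 3 - 3 = n := by omega
  have e1 : n + 3 - 1 = n + 2 := by omega
  simp only [e3, e1]
  have hEq1 : ∀ r ∈ Ioo (0:ℝ) R, deriv f r = g r := fun r hr => (hfd r hr).deriv
  have hEq2 : ∀ r ∈ Ioo (0:ℝ) R, deriv (deriv f) r = g' r := by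
    intro r hr
    have hev : deriv f =ᶠ[nhds r] g := by
      filter_upwards [Ioo_mem_nhds hr.1 hr.2] with x hx using hEq1 x hx
    rw [hev.deriv_eq]
    exact (hgd r hr).deriv
  have i1 : (∫ r in Ioo (0:ℝ) R, |f r|^2 * r^n) = ∫ r in Ioo (0:ℝ) R, (f r)^2 * r^n := by
    simp [sq_abs]
  have i2 : (∫ r in Ioo (0:ℝ) R, (|f r|^2 + |deriv f r|^2) * r^(n+2))
      = ∫ r in Ioo (0:ℝ) R, ((f r)^2 + (g r)^2) * r^(n+2) := by
    apply setIntegral_congr_fun measurableSet_Ioo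
    intro r hr
    simp [sq_abs, hEq1 r hr]
  have i3 : (∫ r in Ioo (0:ℝ) R, |deriv f r|^2 * r^n) = ∫ r in Ioo (0:ℝ) R, (g r)^2 * r^n := by
    apply setIntegral_congr_fun measurableSet_Ioo
    intro r hr
    simp [sq_abs, hEq1 r hr]
  have i4 : (∫ r in Ioo (0:ℝ) R, |deriv (deriv f) r + ((n+3:ℕ) - 1 : ℝ) * deriv f r / r|^2 * r^(n+2))
      = ∫ r in Ioo (0:ℝ) R, (g' r + ((n:ℝ)+2) * g r / r)^2 * r^(n+2) := by
    apply setIntegral_congr_fun measurableSet_Ioo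
    intro r hr
    show |deriv (deriv f) r + ((n+3:ℕ) - 1 : ℝ) * deriv f r / r|^2 * r^(n+2)
        = (g' r + ((n:ℝ)+2) * g r / r)^2 * r^(n+2)
    rw [sq_abs, hEq1 r hr, hEq2 r hr]
    push_cast
    ring
  rw [i1, i2, i3, i4]
  exact key
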